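/- Let E ∈ ℝ, B > 0, D = E² + B², and β ∈ (0, π/2). Define g(H) = (H² + 2sin²β(E·cot β − B)H + D·sin²β)/(H² + 2sin²β(E·cot β + B)H + D·sin²β) for H > 0, assuming the denominator is positive on (0,∞). Then g attains its minimum on (0,∞) at H = sin β·√D, and g(sin β·√D) = (√D + E·cos β − B·sin β)/(√D + E·cos β + B·sin β). -/

import Mathlib

open Real

/-- For `E ∈ ℝ`, `B > 0`, `D = E² + B²`, `β ∈ (0, π/2)`, the function
`g(H) = (H² + 2sin²β(E·cotβ − B)H + D·sin²β)/(H² + 2sin²β(E·cotβ + B)H + D·sin²β)`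
(assuming the denominator is positive on `(0,∞)`) attains its minimum on `(0,∞)`
at `H = sinβ·√D`, with value `(√D + E·cosβ − B·sinβ)/(√D + E·cosβ + B·sinβ)`. -/
theorem kappa_sq_min_sectorial (E B D β : ℝ) (hB : 0 < B) (hD : D = E ^ 2 + B ^ 2)
    (hβ : β ∈ Set.Ioo (0 : ℝ) (π / 2))
    (g : ℝ → ℝ)
    (hg : ∀ H : ℝ, g H =
      (H ^ 2 + 2 * Real.sin β ^ 2 * (E * Real.cot β - B) * H + D * Real.sin β ^ 2) /
        (H ^ 2 + 2 * Real.sin β ^ 2 * (E * Real.cot β + B) * H + D * Real.sin β ^ 2))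
    (hden : ∀ H : ℝ, 0 < H →
      0 < H ^ 2 + 2 * Real.sin β ^ 2 * (E * Real.cot β + B) * H + D * Real.sin β ^ 2) :
    (∀ H : ℝ, 0 < H → g (Real.sin β * Real.sqrt D) ≤ g H) ∧
      g (Real.sin β * Real.sqrt D) =
        (Real.sqrt D + E * Real.cos β - B * Real.sin β) /
          (Real.sqrt D + E * Real.cos β + B * Real.sin β) := by
  obtain ⟨hβ0, hβ2⟩ := hβ
  have hpi := Real.pi_pos
  have hs : 0 < Real.sin β := Real.sin_pos_of_pos_of_lt_pi hβ0 (by linarith)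
  have hc : 0 < Real.cos β := Real.cos_pos_of_mem_Ioo ⟨by linarith, hβ2⟩
  have hcot : Real.cot β = Real.cos β / Real.sin β := Real.cot_eq_cos_div_sin β
  have hDpos : 0 < D := by nlinarith
  have hsD : 0 < Real.sqrt D := Real.sqrt_pos.mpr hDpos
  have hsq : Real.sqrt D ^ 2 = D := Real.sq_sqrt hDpos.le
  set s := Real.sin β with hsdef
  set c := Real.cos β with hcdef
  set r := Real.sqrt D with hrdef
  have hH0pos : 0 < s * r := mul_pos hs hsD
  have hden0 := hden (s * r) hH0pos
  have hnumid : (s * r) ^ 2 + 2 * s ^ 2 * (E * Real.cot β - B) * (s * r) + D * s ^ 2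
      = 2 * s ^ 2 * r * (r + E * c - B * s) := by
    rw [hcot]; field_simp; linear_combination (-1) * hsq
  have hdenid : (s * r) ^ 2 + 2 * s ^ 2 * (E * Real.cot β + B) * (s * r) + D * s ^ 2
      = 2 * s ^ 2 * r * (r + E * c + B * s) := by
    rw [hcot]; field_simp; linear_combination (-1) * hsq
  have hfac : 0 < 2 * s ^ 2 * r := by positivity
  have hpos2 : 0 < r + E * c + B * s := by
    have := hden0
    rw [hdenid] at this
    by_contra h
    push_neg at h
    nlinarith [mul_nonneg hfac.le (neg_nonneg.mpr h)]
  constructor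
  · intro H hH
    have hdH := hden H hH
    rw [hg, hg]
    rw [div_le_div_iff₀ hden0 hdH]
    set k := E * Real.cot β with hk
    have key : (H ^ 2 + 2 * s ^ 2 * (k - B) * H + D * s ^ 2) *
          ((s * r) ^ 2 + 2 * s ^ 2 * (k + B) * (s * r) + D * s ^ 2) -
        ((s * r) ^ 2 + 2 * s ^ 2 * (k - B) * (s * r) + D * s ^ 2) *
          (H ^ 2 + 2 * s ^ 2 * (k + B) * H + D * s ^ 2) =
        4 * s ^ 3 * B * r * (H - s * r) ^ 2 := by
      linear_combination (4 * s ^ 4 * B * (H - s * r)) * hsq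
    nlinarith [mul_nonneg (by positivity : (0:ℝ) ≤ 4 * s ^ 3 * B * r) (sq_nonneg (H - s * r))]
  · rw [hg, hnumid, hdenid, mul_div_mul_left _ _ (ne_of_gt hfac)]
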